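/- arXiv:1309.4868 — 3 statements merged into one kernel-verified Lean document; each statement's English description precedes it below -/
import Mathlib

section
/- Let E be a real inner product space, let k be a real number with k > 0, and let σ, v, s ∈ E satisfy ‖σ‖ ≤ k. Then the following two conditions are equivalent: (i) (Tresca's friction law) if ‖σ‖ = k then there exists a real λ ≥ 0 such that v = s - λ • σ, and if ‖σ‖ < k then v = s; (ii) ⟪v - s, σ⟫ + k * ‖v - s‖ = 0. -/
/-- Pointwise equivalence of Tresca's friction law with the identity
`⟪v - s, σ⟫ + k‖v - s‖ = 0`, under the constraint `‖σ‖ ≤ k`, `k > 0`. -/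
theorem tresca_law_iff {E : Type*} [NormedAddCommGroup E] [InnerProductSpace ℝ E]
    (k : ℝ) (hk : 0 < k) (σ v s : E) (hσ : ‖σ‖ ≤ k) :
    ((‖σ‖ = k → ∃ l : ℝ, 0 ≤ l ∧ v = s - l • σ) ∧ (‖σ‖ < k → v = s)) ↔
      (inner ℝ (v - s) σ : ℝ) + k * ‖v - s‖ = 0 := by
  constructor
  · rintro ⟨h1, h2⟩
    rcases lt_or_eq_of_le hσ with h | h
    · rw [h2 h]
      simp
    · obtain ⟨l, hl, hv⟩ := h1 h
      have : v - s = -(l • σ) := by rw [hv]; abel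
      rw [this]
      rw [inner_neg_left, inner_smul_left, real_inner_self_eq_norm_sq, norm_neg, norm_smul,
        h]
      simp only [RCLike.ofReal_real_eq_id, id_eq, Real.norm_eq_abs, abs_of_nonneg hl, conj_trivial]
      ring
  · intro h
    by_cases hvs : v = s
    · subst hvs
      exact ⟨fun _ => ⟨0, le_refl 0, by simp⟩, fun _ => rfl⟩
    · have hn : (0:ℝ) < ‖v - s‖ := by
        rw [norm_pos_iff]; exact sub_ne_zero_of_ne hvs
      have hinner : (inner ℝ (v - s) σ : ℝ) = -(k * ‖v - s‖) := by linarith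
      have hcs : -(inner ℝ (v - s) σ : ℝ) ≤ ‖v - s‖ * ‖σ‖ := by
        have := abs_real_inner_le_norm (v - s) σ
        have := neg_abs_le (inner ℝ (v - s) σ : ℝ)
        linarith
      have hσk : ‖σ‖ = k := by
        have : k * ‖v - s‖ ≤ ‖v - s‖ * ‖σ‖ := by rw [hinner] at hcs; linarith
        nlinarith
      have heq : (inner ℝ (s - v) σ : ℝ) = ‖s - v‖ * ‖σ‖ := by
        have : (inner ℝ (s - v) σ : ℝ) = -(inner ℝ (v - s) σ : ℝ) := by
          rw [← inner_neg_left]; congr 1; abel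
        rw [this, hinner, neg_neg, hσk]
        rw [show s - v = -(v - s) by abel, norm_neg]
        ring
      have := (inner_eq_norm_mul_iff_real).mp heq
      -- ‖σ‖ • (s - v) = ‖s - v‖ • σ
      refine ⟨fun _ => ⟨‖s - v‖ / k, by positivity, ?_⟩, fun hlt => absurd hσk (ne_of_lt hlt)⟩
      rw [hσk] at this
      have hsv : s - v = (‖s - v‖ / k) • σ := by
        have h2 := congrArg (fun x => k⁻¹ • x) this
        simpa [smul_smul, inv_mul_cancel₀ hk.ne', div_eq_inv_mul] using h2
      rw [eq_sub_iff_add_eq, ← eq_sub_iff_add_eq', ← hsv]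
end

section
/- Let E be a real inner product space, let (Ω, m) be a measure space, let θ : Ω → ℝ, let u, v : Ω → E, and let ν : ℝ → ℝ → ℝ be such that for every t ∈ ℝ the function ν t : ℝ → ℝ is nonnegative and monotone nondecreasing. Then ∫_Ω ⟪ν(θ(ω))(‖u(ω)‖) • u(ω) - ν(θ(ω))(‖v(ω)‖) • v(ω), u(ω) - v(ω)⟫ dm(ω) ≥ 0. -/
open MeasureTheory

lemma pointwise_mono_visc {E : Type*} [NormedAddCommGroup E] [InnerProductSpace ℝ E]
    {a b : ℝ} (ha : 0 ≤ a) (hb : 0 ≤ b) (x y : E)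
    (hab : ‖y‖ ≤ ‖x‖ → b ≤ a) (hba : ‖x‖ ≤ ‖y‖ → a ≤ b) :
    0 ≤ (inner ℝ (a • x - b • y) (x - y) : ℝ) := by
  have expand : (inner ℝ (a • x - b • y) (x - y) : ℝ)
      = a * ‖x‖^2 + b * ‖y‖^2 - (a + b) * inner ℝ x y := by
    simp [inner_sub_sub_self, inner_sub_left, inner_sub_right, inner_smul_left,
      inner_smul_right, real_inner_self_eq_norm_sq, real_inner_comm x y]
    ring
  have hcs : (inner ℝ x y : ℝ) ≤ ‖x‖ * ‖y‖ := real_inner_le_norm x y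
  have h1 : (a + b) * inner ℝ x y ≤ (a + b) * (‖x‖ * ‖y‖) :=
    mul_le_mul_of_nonneg_left hcs (by linarith)
  have key : 0 ≤ (‖x‖ - ‖y‖) * (a * ‖x‖ - b * ‖y‖) := by
    rcases le_total ‖x‖ ‖y‖ with h | h
    · have hab' := hba h
      have : a * ‖x‖ ≤ b * ‖y‖ := mul_le_mul hab' h (norm_nonneg x) hb
      nlinarith
    · have hab' := hab h
      have : b * ‖y‖ ≤ a * ‖x‖ := mul_le_mul hab' h (norm_nonneg y) ha
      nlinarith
  rw [expand]; nlinarith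

/-- Integrated monotonicity of the viscosity operator: with `ν t` nonnegative
and nondecreasing for every `t`, the integral
`∫ ⟪ν(θ)(‖u‖) • u - ν(θ)(‖v‖) • v, u - v⟫ dm` is nonnegative. -/
theorem integral_monotone_viscosity {E : Type*} [NormedAddCommGroup E]
    [InnerProductSpace ℝ E] {Ω : Type*} [MeasurableSpace Ω] (m : Measure Ω)
    (θ : Ω → ℝ) (u v : Ω → E) (ν : ℝ → ℝ → ℝ)
    (hν0 : ∀ t s, 0 ≤ ν t s) (hνm : ∀ t, Monotone (ν t)) :
    0 ≤ ∫ ω, (inner ℝ (ν (θ ω) ‖u ω‖ • u ω - ν (θ ω) ‖v ω‖ • v ω) (u ω - v ω) : ℝ) ∂m := by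
  refine integral_nonneg fun ω => ?_
  exact pointwise_mono_visc (hν0 _ _) (hν0 _ _) _ _ (fun h => hνm _ h) (fun h => hνm _ h)
end

section
/- Let E be a finite-dimensional real inner product space, let (Ω, m) be a measure space, let θ : Ω → ℝ be measurable, and let u, v, w : Ω → E be strongly measurable functions such that ω ↦ ‖u(ω)‖ * ‖w(ω)‖ and ω ↦ ‖v(ω)‖ * ‖w(ω)‖ are integrable with respect to m. Let ν : ℝ × E × ℝ → ℝ be continuous and bounded: there is μ₁ ≥ 0 with |ν(t, z, s)| ≤ μ₁ for all (t, z, s). Then the function α : ℝ → ℝ defined by α(t) = ∫_Ω 2 * ν(θ(ω), u(ω) + t • v(ω), ‖u(ω) + t • v(ω)‖) * ⟪u(ω) + t • v(ω), w(ω)⟫ dm(ω) is continuous on ℝ. -/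
open MeasureTheory

/-- Hemicontinuity: `t ↦ ∫ 2 ν(θ, u + t v, ‖u + t v‖) ⟪u + t v, w⟫ dm` is
continuous when `ν` is continuous and bounded and the relevant products of
norms are integrable. -/
theorem continuous_hemicontinuity {E : Type*} [NormedAddCommGroup E]
    [InnerProductSpace ℝ E] [FiniteDimensional ℝ E]
    {Ω : Type*} [MeasurableSpace Ω] (m : Measure Ω)
    (θ : Ω → ℝ) (hθ : Measurable θ)
    (u v w : Ω → E) (hu : StronglyMeasurable u) (hv : StronglyMeasurable v)
    (hw : StronglyMeasurable w)
    (hiu : Integrable (fun ω => ‖u ω‖ * ‖w ω‖) m)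
    (hiv : Integrable (fun ω => ‖v ω‖ * ‖w ω‖) m)
    (ν : ℝ × E × ℝ → ℝ) (hν : Continuous ν)
    (μ₁ : ℝ) (hμ₁ : 0 ≤ μ₁) (hb : ∀ (t : ℝ) (z : E) (s : ℝ), |ν (t, z, s)| ≤ μ₁) :
    Continuous (fun t : ℝ =>
      ∫ ω, 2 * ν (θ ω, u ω + t • v ω, ‖u ω + t • v ω‖) *
        (inner ℝ (u ω + t • v ω) (w ω) : ℝ) ∂m) := by
  rw [continuous_iff_continuousAt]
  intro t₀
  apply continuousAt_of_dominated
    (bound := fun ω => 2 * μ₁ * (‖u ω‖ * ‖w ω‖ + (|t₀| + 1) * (‖v ω‖ * ‖w ω‖)))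
  · filter_upwards with t
    have hg : StronglyMeasurable (fun ω => u ω + t • v ω) := hu.add (hv.const_smul t)
    exact ((hν.comp_stronglyMeasurable
      (hθ.stronglyMeasurable.prodMk (hg.prodMk hg.norm))).const_mul 2).mul
      (hg.inner hw) |>.aestronglyMeasurable
  · filter_upwards [Metric.ball_mem_nhds t₀ one_pos] with t ht
    filter_upwards with ω
    have h1 : |(inner ℝ (u ω + t • v ω) (w ω) : ℝ)| ≤
        ‖u ω‖ * ‖w ω‖ + (|t₀| + 1) * (‖v ω‖ * ‖w ω‖) := by
      calc |(inner ℝ (u ω + t • v ω) (w ω) : ℝ)| ≤ ‖u ω + t • v ω‖ * ‖w ω‖ :=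
            abs_real_inner_le_norm _ _
        _ ≤ (‖u ω‖ + |t| * ‖v ω‖) * ‖w ω‖ := by
            gcongr
            calc ‖u ω + t • v ω‖ ≤ ‖u ω‖ + ‖t • v ω‖ := norm_add_le _ _
              _ = ‖u ω‖ + |t| * ‖v ω‖ := by rw [norm_smul, Real.norm_eq_abs]
        _ ≤ (‖u ω‖ + (|t₀| + 1) * ‖v ω‖) * ‖w ω‖ := by
            have : |t| ≤ |t₀| + 1 := by
              have := abs_sub_abs_le_abs_sub t t₀
              have h2 : |t - t₀| < 1 := by simpa [Real.dist_eq] using ht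
              linarith
            gcongr
        _ = ‖u ω‖ * ‖w ω‖ + (|t₀| + 1) * (‖v ω‖ * ‖w ω‖) := by ring
    calc ‖2 * ν (θ ω, u ω + t • v ω, ‖u ω + t • v ω‖) *
            (inner ℝ (u ω + t • v ω) (w ω) : ℝ)‖
        = 2 * |ν (θ ω, u ω + t • v ω, ‖u ω + t • v ω‖)| *
            |(inner ℝ (u ω + t • v ω) (w ω) : ℝ)| := by
          rw [Real.norm_eq_abs, abs_mul, abs_mul, abs_two]
      _ ≤ 2 * μ₁ * (‖u ω‖ * ‖w ω‖ + (|t₀| + 1) * (‖v ω‖ * ‖w ω‖)) := by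
          have := hb (θ ω) (u ω + t • v ω) ‖u ω + t • v ω‖
          gcongr
  · exact ((hiu.add (hiv.const_mul _)).const_mul _)
  · filter_upwards with ω
    have : Continuous (fun t : ℝ => 2 * ν (θ ω, u ω + t • v ω, ‖u ω + t • v ω‖) *
        (inner ℝ (u ω + t • v ω) (w ω) : ℝ)) := by
      have hg : Continuous (fun t : ℝ => u ω + t • v ω) := by continuity
      exact (continuous_const.mul (hν.comp ((continuous_const.prodMk
        (hg.prodMk hg.norm))))).mul ((continuous_inner.comp (hg.prodMk continuous_const)))
    exact this.continuousAt
end
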